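/- arXiv:1312.6412 — 2 statements merged into one kernel-verified Lean document; each statement's English description precedes it below -/
import Mathlib

section
/- Let {α, β} = {α₁, α₂} (so α+β = α₁+α₂). For all natural numbers r and K and all integers m₁, …, m_r, there exist complex constants C_{j₁,…,j_p} (indexed by 0 ≤ p ≤ K and 1 ≤ j₁ < ⋯ < j_p ≤ r; the inner sum is empty when p > r) such that in U(𝔫̄): x_β(m₁)⋯x_β(m_r)·x_α(−1)^K = Σ_{p=0}^{K} x_α(−1)^{K−p} · Σ_{1≤j₁<⋯<j_p≤r} C_{j₁,…,j_p} · y₁⋯y_r, where y_l = x_{α₁+α₂}(m_l − 1) if l ∈ {j₁,…,j_p} and y_l = x_β(m_l) otherwise. -/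
/- Setup: the nilpotent subalgebra 𝔫 ⊂ 𝔰𝔩(3,ℂ) spanned by E₁₂, E₂₃, E₁₃, its loop
algebra 𝔫̄ = 𝔫 ⊗ ℂ[t,t⁻¹], and the universal enveloping algebra U(𝔫̄). -/

noncomputable section
open scoped TensorProduct

namespace PrincipalSubspaceSL3

attribute [local instance 100] LieRing.ofAssociativeRing

/-- 3×3 complex matrices. -/
abbrev gl3 : Type := Matrix (Fin 3) (Fin 3) ℂ

/-- The root vectors: `Egen 0 = x_{α₁} = E₁₂`, `Egen 1 = x_{α₂} = E₂₃`,
`Egen 2 = x_{α₁+α₂} = E₁₃`. -/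
def Egen : Fin 3 → gl3
  | 0 => Matrix.single 0 1 1
  | 1 => Matrix.single 1 2 1
  | 2 => Matrix.single 0 2 1

lemma egen_lie_mem :
    ∀ x ∈ Submodule.span ℂ (Set.range Egen), ∀ y ∈ Submodule.span ℂ (Set.range Egen),
      ⁅x, y⁆ ∈ Submodule.span ℂ (Set.range Egen) := by
  have key : ∀ a b : Fin 3, ⁅Egen a, Egen b⁆ ∈ Submodule.span ℂ (Set.range Egen) := by
    intro a b
    fin_cases a <;> fin_cases b <;>
      simp only [Egen, Ring.lie_def, Matrix.single_mul_single_same,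
        Matrix.single_mul_single_of_ne, Fin.reduceEq, ne_eq, not_false_eq_true,
        one_mul, sub_zero, zero_sub, sub_self] <;>
      first
        | exact Submodule.zero_mem _
        | exact Submodule.subset_span ⟨2, rfl⟩
        | exact Submodule.neg_mem _ (Submodule.subset_span ⟨2, rfl⟩)
  intro x hx
  induction hx using Submodule.span_induction with
  | mem x hxs =>
      obtain ⟨a, rfl⟩ := hxs
      intro y hy
      induction hy using Submodule.span_induction with
      | mem y hys => obtain ⟨b, rfl⟩ := hys; exact key a b
      | zero => simp
      | add y z hy hz hy' hz' => rw [lie_add]; exact Submodule.add_mem _ hy' hz'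
      | smul c y hy hy' => rw [lie_smul]; exact Submodule.smul_mem _ _ hy'
  | zero => intro y hy; simp
  | add x z hx hz hx' hz' =>
      intro y hy; rw [add_lie]; exact Submodule.add_mem _ (hx' y hy) (hz' y hy)
  | smul c x hx hx' =>
      intro y hy; rw [smul_lie]; exact Submodule.smul_mem _ _ (hx' y hy)

/-- The nilpotent Lie subalgebra 𝔫 = ℂE₁₂ ⊕ ℂE₂₃ ⊕ ℂE₁₃ of 𝔰𝔩(3,ℂ). -/
def nn : LieSubalgebra ℂ gl3 :=
  { Submodule.span ℂ (Set.range Egen) with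
    lie_mem' := fun {x y} hx hy => egen_lie_mem x hx y hy }

/-- Laurent polynomials ℂ[t, t⁻¹]. -/
abbrev A : Type := LaurentPolynomial ℂ

/-- The loop algebra 𝔫̄ = 𝔫 ⊗ ℂ[t,t⁻¹]. -/
abbrev nbar : Type := A ⊗[ℂ] nn

set_option synthInstance.maxHeartbeats 1000000 in
instance : LieAlgebra ℂ nbar where
  lie_smul c x y := by
    have h := lie_smul (algebraMap ℂ A c) x y
    rwa [algebraMap_smul, algebraMap_smul] at h

/-- The root vectors as elements of 𝔫. -/
def en (i : Fin 3) : nn := ⟨Egen i, Submodule.subset_span ⟨i, rfl⟩⟩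

/-- `nx i m` is the element x_{α}(m) = x_α ⊗ tᵐ of 𝔫̄, where α is α₁, α₂, α₁+α₂
according to i = 0, 1, 2. -/
def nx (i : Fin 3) (m : ℤ) : nbar := LaurentPolynomial.T m ⊗ₜ[ℂ] en i

/-- The universal enveloping algebra U(𝔫̄). -/
abbrev U : Type := UniversalEnvelopingAlgebra ℂ nbar

/-- `xg i m` is the element x_α(m) regarded inside U(𝔫̄). -/
def xg (i : Fin 3) (m : ℤ) : U := UniversalEnvelopingAlgebra.ι ℂ (nx i m)

/-- `Rtr k i t` = R^i_{-1,t} : the sum of x_{α_i}(m₁)⋯x_{α_i}(m_{k+1}) over all integer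
tuples with every m_j ≤ -1 and m₁+⋯+m_{k+1} = -t (parametrized by m_j = -1 - n_j with
n : Fin (k+1) → ℕ, ∑ n = t - (k+1)).  Here i : Fin 2 refers to the simple root α_{i+1}. -/
def Rtr (k : ℕ) (i : Fin 2) (t : ℤ) : U :=
  ∑ f ∈ Finset.Nat.antidiagonalTuple (k + 1) (t - (k + 1)).toNat,
    (List.ofFn fun j : Fin (k + 1) => xg i.castSucc (-1 - (f j : ℤ))).prod

/-- The left ideal J = Σ_{i,t≥k+1} U(𝔫̄)·R^i_{-1,t}. -/
def Jid (k : ℕ) : Submodule U U :=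
  Submodule.span U {u : U | ∃ i : Fin 2, ∃ t : ℤ, (k : ℤ) + 1 ≤ t ∧ u = Rtr k i t}

/-- The left ideal U(𝔫̄)·𝔫̄₊, generated by the x_α(m) with m ≥ 0. -/
def nplusIdeal : Submodule U U :=
  Submodule.span U {u : U | ∃ i : Fin 3, ∃ m : ℤ, 0 ≤ m ∧ u = xg i m}

/-- The left ideal I_{kΛ₀} = J + U(𝔫̄)·𝔫̄₊. -/
def IkL0 (k : ℕ) : Submodule U U := Jid k ⊔ nplusIdeal

/-- The left ideal I_{k₀Λ₀+k₁Λ₁+k₂Λ₂} = I_{kΛ₀} + U·x_{α₁}(-1)^{k₀+k₂+1}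
+ U·x_{α₂}(-1)^{k₀+k₁+1} + U·x_{α₁+α₂}(-1)^{k₀+1} (with k = k₀+k₁+k₂). -/
def Iwt (k k0 k1 k2 : ℕ) : Submodule U U :=
  IkL0 k ⊔ Submodule.span U {xg 0 (-1) ^ (k0 + k2 + 1)}
    ⊔ Submodule.span U {xg 1 (-1) ^ (k0 + k1 + 1)}
    ⊔ Submodule.span U {xg 2 (-1) ^ (k0 + 1)}


set_option maxHeartbeats 1000000
set_option synthInstance.maxHeartbeats 1000000

lemma en_lie_two (i : Fin 3) : ⁅en i, en 2⁆ = 0 := by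
  apply Subtype.ext
  show ⁅Egen i, Egen 2⁆ = 0
  fin_cases i <;>
    simp [Egen, Ring.lie_def, Matrix.single_mul_single_same, Matrix.single_mul_single_of_ne]

lemma nx_lie_two (i : Fin 3) (m k : ℤ) : ⁅nx i m, nx 2 k⁆ = 0 := by
  rw [nx, nx, LieAlgebra.ExtendScalars.bracket_tmul, en_lie_two, TensorProduct.tmul_zero]

lemma hT (m : ℤ) : LaurentPolynomial.T (R := ℂ) m * LaurentPolynomial.T (-1) =
    LaurentPolynomial.T (m - 1) := by
  rw [← LaurentPolynomial.T_add]; ring_nf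

lemma en01 : ⁅en 0, en 1⁆ = en 2 := by
  apply Subtype.ext
  show ⁅Egen 0, Egen 1⁆ = Egen 2
  simp [Egen, Ring.lie_def, Matrix.single_mul_single_same, Matrix.single_mul_single_of_ne]

lemma en10 : ⁅en 1, en 0⁆ = -en 2 := by
  rw [← lie_skew, en01]

lemma nx01 (m : ℤ) : ⁅nx 0 m, nx 1 (-1)⁆ = (1 : ℂ) • nx 2 (m - 1) := by
  rw [nx, nx, LieAlgebra.ExtendScalars.bracket_tmul, hT, en01, one_smul, nx]

lemma nx10 (m : ℤ) : ⁅nx 1 m, nx 0 (-1)⁆ = (-1 : ℂ) • nx 2 (m - 1) := by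
  rw [nx, nx, LieAlgebra.ExtendScalars.bracket_tmul, hT, en10, nx,
    TensorProduct.tmul_neg]
  module

lemma nx_lie_eps (i j : Fin 2) (hij : i ≠ j) (m : ℤ) :
    ∃ ε : ℂ, ⁅nx j.castSucc m, nx i.castSucc (-1)⁆ = ε • nx 2 (m - 1) := by
  fin_cases i <;> fin_cases j
  · exact absurd rfl hij
  · exact ⟨-1, nx10 m⟩
  · exact ⟨1, nx01 m⟩
  · exact absurd rfl hij

lemma pow_comm_aux {R : Type*} [Ring R] [Algebra ℂ R] (a b c : R)
    (hba : b * a = a * b + c) (hac : a * c = c * a) :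
    ∀ n : ℕ, b * a ^ n = a ^ n * b + (n : ℂ) • (a ^ (n - 1) * c) := by
  intro n
  induction n with
  | zero => simp
  | succ n ih =>
    have hAC : Commute a c := hac
    have hcan : c * a ^ n = a ^ n * c := (hAC.symm.pow_right n)
    have h2 : (n : ℂ) • (a * (a ^ (n - 1) * c)) = (n : ℂ) • (a ^ n * c) := by
      cases n with
      | zero => simp
      | succ k => rw [Nat.add_sub_cancel, ← mul_assoc, ← pow_succ']
    calc b * a ^ (n + 1)
        = (b * a) * a ^ n := by rw [pow_succ', ← mul_assoc]
      _ = a * (b * a ^ n) + c * a ^ n := by rw [hba, add_mul, mul_assoc]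
      _ = a * (a ^ n * b + (n : ℂ) • (a ^ (n - 1) * c)) + a ^ n * c := by rw [ih, hcan]
      _ = a ^ (n + 1) * b + (n : ℂ) • (a * (a ^ (n - 1) * c)) + a ^ n * c := by
            rw [mul_add, mul_smul_comm, ← mul_assoc, ← pow_succ']
      _ = a ^ (n + 1) * b + (n : ℂ) • (a ^ n * c) + (1 : ℂ) • (a ^ n * c) := by
            rw [h2, one_smul]
      _ = a ^ (n + 1) * b + ((n : ℂ) + 1) • (a ^ n * c) := by rw [add_assoc, ← add_smul]
      _ = a ^ (n + 1) * b + ((n + 1 : ℕ) : ℂ) • (a ^ ((n + 1) - 1) * c) := by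
            rw [Nat.add_sub_cancel]; push_cast; ring_nf

lemma main_span (i j : Fin 2) (hij : i ≠ j) (K : ℕ) :
    ∀ (r : ℕ) (m : Fin r → ℤ),
      (List.ofFn fun l : Fin r => xg j.castSucc (m l)).prod * xg i.castSucc (-1) ^ K ∈
        Submodule.span ℂ (Set.range fun s : {s : Finset (Fin r) // s.card ≤ K} =>
          xg i.castSucc (-1) ^ (K - s.1.card) *
            (List.ofFn fun l : Fin r =>
              if l ∈ s.1 then xg 2 (m l - 1) else xg j.castSucc (m l)).prod) := by
  intro r
  induction r with
  | zero =>
      intro m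
      apply Submodule.subset_span
      exact ⟨⟨∅, Nat.zero_le K⟩, by simp⟩
  | succ r ih =>
      intro m
      set a : U := xg i.castSucc (-1) with ha
      set b : U := xg j.castSucc (m 0) with hb
      obtain ⟨ε, hε⟩ := nx_lie_eps i j hij (m 0)
      have keylie : ∀ x y : nbar, UniversalEnvelopingAlgebra.ι ℂ ⁅x, y⁆ =
          UniversalEnvelopingAlgebra.ι ℂ x * UniversalEnvelopingAlgebra.ι ℂ y -
            UniversalEnvelopingAlgebra.ι ℂ y * UniversalEnvelopingAlgebra.ι ℂ x := by
        intro x y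
        rw [LieHom.map_lie, Ring.lie_def]
      set c : U := ε • xg 2 (m 0 - 1) with hc
      have hba : b * a = a * b + c := by
        rw [hc, hb, ha, xg, xg, xg, ← map_smul, ← hε, keylie]
        noncomm_ring
      have hac' : a * xg 2 (m 0 - 1) = xg 2 (m 0 - 1) * a := by
        have h := keylie (nx i.castSucc (-1)) (nx 2 (m 0 - 1))
        rw [nx_lie_two, map_zero] at h
        have h2 := sub_eq_zero.mp h.symm
        rw [ha, xg, xg]
        exact h2
      have hac : a * c = c * a := by
        rw [hc, mul_smul_comm, smul_mul_assoc, hac']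
      -- the embedding Fin r ↪ Fin (r+1)
      set emb : Fin r ↪ Fin (r + 1) := ⟨Fin.succ, Fin.succ_injective r⟩ with hemb
      -- list splitting lemmas
      have hsplit : ∀ (s : Finset (Fin r)) (v0 : U) (v : Fin r → U),
          (List.ofFn fun l : Fin (r+1) =>
            if l = 0 then v0 else if h : l = 0 then v0 else v (l.pred h)) = [] → True := fun _ _ _ _ => trivial
      have hY1 : ∀ s : Finset (Fin r),
          (List.ofFn fun l : Fin (r+1) =>
            if l ∈ s.map emb then xg 2 (m l - 1) else xg j.castSucc (m l)).prod =
          b * (List.ofFn fun l : Fin r =>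
            if l ∈ s then xg 2 (m l.succ - 1) else xg j.castSucc (m l.succ)).prod := by
        intro s
        rw [List.ofFn_succ, List.prod_cons]
        congr 1
        · have h0 : (0 : Fin (r+1)) ∉ s.map emb := by
            simp only [Finset.mem_map, hemb, Function.Embedding.coeFn_mk]
            rintro ⟨x, -, hx⟩
            exact Fin.succ_ne_zero x hx
          rw [if_neg h0]
        · refine congrArg List.prod (congrArg List.ofFn (funext fun l => ?_))
          have hmem : l.succ ∈ s.map emb ↔ l ∈ s := by
            simp [hemb, Fin.succ_inj]
          simp only [hmem]
      have hY2 : ∀ s : Finset (Fin r),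
          (List.ofFn fun l : Fin (r+1) =>
            if l ∈ insert 0 (s.map emb) then xg 2 (m l - 1) else xg j.castSucc (m l)).prod =
          xg 2 (m 0 - 1) * (List.ofFn fun l : Fin r =>
            if l ∈ s then xg 2 (m l.succ - 1) else xg j.castSucc (m l.succ)).prod := by
        intro s
        rw [List.ofFn_succ, List.prod_cons]
        congr 1
        · rw [if_pos (Finset.mem_insert_self 0 _)]
        · refine congrArg List.prod (congrArg List.ofFn (funext fun l => ?_))
          have hmem : l.succ ∈ insert 0 (s.map emb) ↔ l ∈ s := by
            simp [hemb, Finset.mem_insert, Fin.succ_ne_zero l, Fin.succ_inj]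
          simp only [hmem]
      -- split the main product
      have hBsplit : (List.ofFn fun l : Fin (r+1) => xg j.castSucc (m l)).prod =
          b * (List.ofFn fun l : Fin r => xg j.castSucc (m l.succ)).prod := by
        rw [List.ofFn_succ, List.prod_cons, hb]
      rw [hBsplit, mul_assoc]
      -- inner membership transfer
      have key : ∀ u ∈ Submodule.span ℂ (Set.range fun s : {s : Finset (Fin r) // s.card ≤ K} =>
            a ^ (K - s.1.card) *
              (List.ofFn fun l : Fin r =>
                if l ∈ s.1 then xg 2 (m l.succ - 1) else xg j.castSucc (m l.succ)).prod),
          b * u ∈ Submodule.span ℂ (Set.range fun s : {s : Finset (Fin (r+1)) // s.card ≤ K} =>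
            a ^ (K - s.1.card) *
              (List.ofFn fun l : Fin (r+1) =>
                if l ∈ s.1 then xg 2 (m l - 1) else xg j.castSucc (m l)).prod) := by
        intro u hu
        induction hu using Submodule.span_induction with
        | zero => rw [mul_zero]; exact Submodule.zero_mem _
        | add u v _ _ hu' hv' => rw [mul_add]; exact Submodule.add_mem _ hu' hv'
        | smul t u _ hu' => rw [mul_smul_comm]; exact Submodule.smul_mem _ _ hu'
        | mem u hu' =>
          obtain ⟨⟨s, hs⟩, rfl⟩ := hu'
          set n : ℕ := K - s.card with hn
          set Y : U := (List.ofFn fun l : Fin r =>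
            if l ∈ s then xg 2 (m l.succ - 1) else xg j.castSucc (m l.succ)).prod with hYdef
          have hcomm := pow_comm_aux a b c hba hac n
          have expand : b * (a ^ n * Y) =
              a ^ n * (b * Y) + (n : ℂ) • (ε • (a ^ (n-1) * (xg 2 (m 0 - 1) * Y))) := by
            have h1 : c * Y = ε • (xg 2 (m 0 - 1) * Y) := by rw [hc, smul_mul_assoc]
            calc b * (a ^ n * Y) = (b * a ^ n) * Y := by rw [mul_assoc]
              _ = (a ^ n * b + (n : ℂ) • (a ^ (n - 1) * c)) * Y := by rw [hcomm]
              _ = a ^ n * (b * Y) + (n : ℂ) • (a ^ (n - 1) * (c * Y)) := by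
                    rw [add_mul, smul_mul_assoc, mul_assoc, mul_assoc]
              _ = a ^ n * (b * Y) + (n : ℂ) • (ε • (a ^ (n - 1) * (xg 2 (m 0 - 1) * Y))) := by
                    rw [h1, mul_smul_comm]
          rw [expand]
          have hcard1 : (s.map emb).card = s.card := Finset.card_map emb
          refine Submodule.add_mem _ ?_ ?_
          · apply Submodule.subset_span
            refine ⟨⟨s.map emb, by rw [hcard1]; exact hs⟩, ?_⟩
            simp only
            rw [hY1 s, ← hYdef, hcard1, ← hn]
          by_cases hsK : s.card = K
          · have : n = 0 := by rw [hn, hsK, Nat.sub_self]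
            rw [this]
            norm_num
          · have hlt : s.card + 1 ≤ K := Nat.succ_le_of_lt (lt_of_le_of_ne hs hsK)
            apply Submodule.smul_mem
            apply Submodule.smul_mem
            apply Submodule.subset_span
            have h0notin : (0 : Fin (r+1)) ∉ s.map emb := by
              simp only [Finset.mem_map, hemb, Function.Embedding.coeFn_mk]
              rintro ⟨x, -, hx⟩
              exact Fin.succ_ne_zero x hx
            have hcard2 : (insert 0 (s.map emb)).card = s.card + 1 := by
              rw [Finset.card_insert_of_notMem h0notin, hcard1]
            refine ⟨⟨insert 0 (s.map emb), by rw [hcard2]; exact hlt⟩, ?_⟩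
            simp only
            rw [hY2 s, ← hYdef, hcard2]
            have hexp : K - (s.card + 1) = n - 1 := by omega
            rw [hexp]
      exact key _ (ih (fun l => m l.succ))

/-- Lemma 3.3 (rootcommute).  With {α, β} = {α₁, α₂} (indices i ≠ j in Fin 2,
so α+β = α₁+α₂ has index 2), for all r, K ∈ ℕ and integers m₁, …, m_r there are complex
constants C (indexed by the subsets {j₁ < ⋯ < j_p} of {1,…,r}, with 0 ≤ p ≤ K) such that
x_β(m₁)⋯x_β(m_r)·x_α(−1)^K = Σ_{p=0}^{K} x_α(−1)^{K−p} Σ_{j₁<⋯<j_p} C_{j₁…j_p} y₁⋯y_r,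
where y_l = x_{α₁+α₂}(m_l − 1) if l ∈ {j₁,…,j_p} and y_l = x_β(m_l) otherwise. -/
theorem statement0 (i j : Fin 2) (hij : i ≠ j) (r K : ℕ) (m : Fin r → ℤ) :
    ∃ C : Finset (Fin r) → ℂ,
      (List.ofFn fun l : Fin r => xg j.castSucc (m l)).prod * xg i.castSucc (-1) ^ K
        = ∑ p ∈ Finset.range (K + 1),
            xg i.castSucc (-1) ^ (K - p) *
              ∑ s ∈ Finset.univ.filter fun s : Finset (Fin r) => s.card = p,
                C s • (List.ofFn fun l : Fin r =>
                  if l ∈ s then xg 2 (m l - 1) else xg j.castSucc (m l)).prod := by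
  classical
  have h := main_span i j hij K r m
  rw [Submodule.mem_span_range_iff_exists_fun] at h
  obtain ⟨c, hc⟩ := h
  set a : U := xg i.castSucc (-1) with ha
  set Y : Finset (Fin r) → U := fun s =>
    (List.ofFn fun l : Fin r =>
      if l ∈ s then xg 2 (m l - 1) else xg j.castSucc (m l)).prod with hY
  set C : Finset (Fin r) → ℂ := fun s => if h : s.card ≤ K then c ⟨s, h⟩ else 0 with hC
  refine ⟨C, ?_⟩
  rw [← hc]
  symm
  have step1 : ∀ p ∈ Finset.range (K + 1),
      a ^ (K - p) * ∑ s ∈ Finset.univ.filter (fun s : Finset (Fin r) => s.card = p), C s • Y s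
      = ∑ s ∈ Finset.univ.filter (fun s : Finset (Fin r) => s.card = p),
          C s • (a ^ (K - s.card) * Y s) := by
    intro p _
    rw [Finset.mul_sum]
    refine Finset.sum_congr rfl fun s hs => ?_
    rw [mul_smul_comm, (Finset.mem_filter.mp hs).2]
  rw [Finset.sum_congr rfl step1]
  have hfil : ∀ p ∈ Finset.range (K + 1),
      Finset.univ.filter (fun s : Finset (Fin r) => s.card = p) =
        (Finset.univ.filter (fun s : Finset (Fin r) => s.card ≤ K)).filter
          (fun s => s.card = p) := by
    intro p hp
    ext s
    simp only [Finset.mem_filter, Finset.mem_univ, true_and]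
    constructor
    · intro h'; exact ⟨le_of_eq_of_le h' (Nat.lt_succ_iff.mp (Finset.mem_range.mp hp)), h'⟩
    · exact And.right
  rw [Finset.sum_congr rfl fun p hp => by rw [hfil p hp]]
  rw [Finset.sum_fiberwise_of_maps_to (g := Finset.card)
    (fun s hs => Finset.mem_range.mpr
      (Nat.lt_succ_of_le (Finset.mem_filter.mp hs).2))
    (fun s => C s • (a ^ (K - s.card) * Y s))]
  rw [Finset.sum_subtype (p := fun s : Finset (Fin r) => s.card ≤ K) (Finset.univ.filter fun s : Finset (Fin r) => s.card ≤ K)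
    (fun x => by simp) (fun s => C s • (a ^ (K - s.card) * Y s))]
  refine Finset.sum_congr rfl fun s' _ => ?_
  have : C s'.1 = c s' := by rw [hC]; simp [dif_pos s'.2]
  rw [this, hY]

end PrincipalSubspaceSL3
end
end

section
/- For every integer t ≥ k+1, the element R¹_{−1,t+k+1} − τ_{λ₁}(R¹_{−1,t}) lies in U(𝔫̄)·x_{α₁}(−1); that is, R¹_{−1,t+k+1} minus the sum of x_{α₁}(m₁−1)⋯x_{α₁}(m_{k+1}−1) over all integer tuples (m₁,…,m_{k+1}) with every m_j ≤ −1 and m₁+⋯+m_{k+1} = −t lies in the left ideal U(𝔫̄)·x_{α₁}(−1). -/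
/- Setup: the nilpotent subalgebra 𝔫 ⊂ 𝔰𝔩(3,ℂ) spanned by E₁₂, E₂₃, E₁₃, its loop
algebra 𝔫̄ = 𝔫 ⊗ ℂ[t,t⁻¹], and the universal enveloping algebra U(𝔫̄). -/

noncomputable section
open scoped TensorProduct

attribute [local instance 100] LieRing.ofAssociativeRing

namespace PrincipalSubspaceSL3

set_option synthInstance.maxHeartbeats 1000000 in
set_option maxHeartbeats 1000000 in
lemma xg_comm (m p : ℤ) : Commute (xg 0 m) (xg 0 p) := by
  have h : ⁅nx 0 m, nx 0 p⁆ = (0 : nbar) := by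
    show ⁅(LaurentPolynomial.T m : A) ⊗ₜ[ℂ] en 0, (LaurentPolynomial.T p : A) ⊗ₜ[ℂ] en 0⁆ = (0 : nbar)
    rw [LieAlgebra.ExtendScalars.bracket_tmul, lie_self, TensorProduct.tmul_zero]
  have h2 := (UniversalEnvelopingAlgebra.ι ℂ (L := nbar)).map_lie (nx 0 m) (nx 0 p)
  rw [h, Ring.lie_def] at h2
  have h3 : (UniversalEnvelopingAlgebra.ι ℂ (L := nbar)) (0 : nbar) = 0 :=
    (UniversalEnvelopingAlgebra.ι ℂ (L := nbar)).map_zero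
  rw [h3] at h2
  have : xg 0 m * xg 0 p = xg 0 p * xg 0 m := sub_eq_zero.mp h2.symm
  exact this

lemma prod_mem_span (l : List ℤ) (h : (-1 : ℤ) ∈ l) :
    (l.map (xg 0)).prod ∈ Submodule.span U {xg 0 (-1)} := by
  induction l with
  | nil => simp at h
  | cons a l ih =>
    rw [List.map_cons, List.prod_cons]
    rcases eq_or_ne a (-1) with rfl | hne
    · have hc : Commute (xg 0 (-1)) (l.map (xg 0)).prod := by
        refine Commute.list_prod_right _ _ ?_
        intro y hy
        obtain ⟨m, _, rfl⟩ := List.mem_map.mp hy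
        exact xg_comm _ _
      rw [hc.eq]
      have : (l.map (xg 0)).prod * xg 0 (-1) = (l.map (xg 0)).prod • xg 0 (-1) := rfl
      rw [this]
      exact Submodule.smul_mem _ _ (Submodule.mem_span_singleton_self _)
    · have h' : (-1 : ℤ) ∈ l := by
        rcases List.mem_cons.mp h with h1 | h1
        · exact absurd h1.symm hne
        · exact h1
      have : xg 0 a * (l.map (xg 0)).prod = xg 0 a • (l.map (xg 0)).prod := rfl
      rw [this]
      exact Submodule.smul_mem _ _ (ih h')

lemma key_lemma (k : ℕ) (N n : ℕ) (hN : N = n + (k + 1)) :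
    (∑ f ∈ Finset.Nat.antidiagonalTuple (k + 1) N,
        (List.ofFn fun j : Fin (k + 1) => xg 0 (-1 - (f j : ℤ))).prod) -
      (∑ f ∈ Finset.Nat.antidiagonalTuple (k + 1) n,
        (List.ofFn fun j : Fin (k + 1) => xg 0 (-1 - (f j : ℤ) - 1)).prod)
    ∈ Submodule.span U {xg 0 (-1)} := by
  classical
  set S := Finset.Nat.antidiagonalTuple (k + 1) N with hS
  have hsplit := Finset.sum_filter_add_sum_filter_not S (fun f => ∀ j, 1 ≤ f j)
    (fun f => (List.ofFn fun j : Fin (k + 1) => xg 0 (-1 - (f j : ℤ))).prod)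
  have hbij : (∑ f ∈ S.filter (fun f => ∀ j, 1 ≤ f j),
      (List.ofFn fun j : Fin (k + 1) => xg 0 (-1 - (f j : ℤ))).prod) =
      ∑ f ∈ Finset.Nat.antidiagonalTuple (k + 1) n,
        (List.ofFn fun j : Fin (k + 1) => xg 0 (-1 - (f j : ℤ) - 1)).prod := by
    refine Finset.sum_nbij' (fun f j => f j - 1) (fun g j => g j + 1) ?_ ?_ ?_ ?_ ?_
    · intro f hf
      simp only [Finset.mem_filter, hS, Finset.Nat.mem_antidiagonalTuple] at hf
      simp only [Finset.Nat.mem_antidiagonalTuple]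
      obtain ⟨hsum, hpos⟩ := hf
      have h1 : ∑ j, ((f j - 1) + 1) = ∑ j, f j := by
        refine Finset.sum_congr rfl fun j _ => ?_
        have := hpos j; omega
      rw [Finset.sum_add_distrib, Finset.sum_const, Finset.card_univ,
        Fintype.card_fin, smul_eq_mul, mul_one] at h1
      omega
    · intro g hg
      simp only [Finset.Nat.mem_antidiagonalTuple] at hg
      simp only [Finset.mem_filter, hS, Finset.Nat.mem_antidiagonalTuple]
      refine ⟨?_, fun j => by show 1 ≤ g j + 1; omega⟩
      rw [Finset.sum_add_distrib, Finset.sum_const, Finset.card_univ,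
        Fintype.card_fin, smul_eq_mul, mul_one, hg]
      omega
    · intro f hf
      rw [Finset.mem_filter] at hf
      funext j
      show f j - 1 + 1 = f j
      have := hf.2 j; omega
    · intro g _
      funext j
      show g j + 1 - 1 = g j
      omega
    · intro f hf
      rw [Finset.mem_filter] at hf
      have hfun : (fun j : Fin (k + 1) => xg 0 (-1 - (f j : ℤ))) =
          (fun j : Fin (k + 1) => xg 0 (-1 - ((f j - 1 : ℕ) : ℤ) - 1)) := by
        funext j
        have h1 := hf.2 j
        have h2 : ((f j - 1 : ℕ) : ℤ) = (f j : ℤ) - 1 := by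
          push_cast [Nat.cast_sub h1]; ring
        rw [h2]; ring_nf
      rw [hfun]
  have hrest : (∑ f ∈ S.filter (fun f => ¬ ∀ j, 1 ≤ f j),
      (List.ofFn fun j : Fin (k + 1) => xg 0 (-1 - (f j : ℤ))).prod)
      ∈ Submodule.span U {xg 0 (-1)} := by
    refine Submodule.sum_mem _ fun f hf => ?_
    rw [Finset.mem_filter] at hf
    push_neg at hf
    obtain ⟨j0, hj0⟩ := hf.2
    have hzero : f j0 = 0 := by omega
    have heq : (List.ofFn fun j : Fin (k + 1) => xg 0 (-1 - (f j : ℤ))) =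
        (List.ofFn fun j : Fin (k + 1) => (-1 - (f j : ℤ))).map (xg 0) := by
      rw [List.map_ofFn]; rfl
    rw [heq]
    refine prod_mem_span _ ?_
    rw [List.mem_ofFn]
    exact ⟨j0, by simp [hzero]⟩
  have hEq : (∑ f ∈ S, (List.ofFn fun j : Fin (k + 1) => xg 0 (-1 - (f j : ℤ))).prod) -
        (∑ f ∈ Finset.Nat.antidiagonalTuple (k + 1) n,
          (List.ofFn fun j : Fin (k + 1) => xg 0 (-1 - (f j : ℤ) - 1)).prod)
      = ∑ f ∈ S.filter (fun f => ¬ ∀ j, 1 ≤ f j),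
          (List.ofFn fun j : Fin (k + 1) => xg 0 (-1 - (f j : ℤ))).prod := by
    rw [← hsplit, hbij]
    exact add_sub_cancel_left _ _
  rw [hEq]
  exact hrest

/-- for t ≥ k+1, R¹_{−1,t+k+1} − τ_{λ₁}(R¹_{−1,t}) ∈ U(𝔫̄)·x_{α₁}(−1);
that is, R¹_{−1,t+k+1} minus the sum of x_{α₁}(m₁−1)⋯x_{α₁}(m_{k+1}−1) over all integer
tuples with m_j ≤ −1, Σm_j = −t (here m_j = −1−f j), lies in U(𝔫̄)·x_{α₁}(−1). -/
theorem statement9 (k : ℕ) (hk : 0 < k) (τ : U ≃ₐ[ℂ] U)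
    (hτ1 : ∀ m : ℤ, τ (xg 0 m) = xg 0 (m - 1))
    (hτ2 : ∀ m : ℤ, τ (xg 1 m) = xg 1 m)
    (hτ3 : ∀ m : ℤ, τ (xg 2 m) = xg 2 (m - 1))
    (t : ℤ) (ht : (k : ℤ) + 1 ≤ t) :
    Rtr k 0 (t + ((k : ℤ) + 1)) - τ (Rtr k 0 t) ∈ Submodule.span U {xg 0 (-1)} ∧
      Rtr k 0 (t + ((k : ℤ) + 1)) -
          (∑ f ∈ Finset.Nat.antidiagonalTuple (k + 1) (t - (k + 1)).toNat,
            (List.ofFn fun j : Fin (k + 1) => xg 0 (-1 - (f j : ℤ) - 1)).prod)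
        ∈ Submodule.span U {xg 0 (-1)} := by
  have hτR : τ (Rtr k 0 t) =
      ∑ f ∈ Finset.Nat.antidiagonalTuple (k + 1) (t - (k + 1)).toNat,
        (List.ofFn fun j : Fin (k + 1) => xg 0 (-1 - (f j : ℤ) - 1)).prod := by
    unfold Rtr
    rw [map_sum]
    refine Finset.sum_congr rfl fun f _ => ?_
    rw [map_list_prod, List.map_ofFn]
    have hfun : (⇑τ ∘ fun j : Fin (k + 1) =>
        xg (Fin.castSucc (0 : Fin 2)) (-1 - (f j : ℤ))) =
        fun j : Fin (k + 1) => xg 0 (-1 - (f j : ℤ) - 1) := by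
      funext j
      show τ (xg (Fin.castSucc (0 : Fin 2)) (-1 - (f j : ℤ))) = xg 0 (-1 - (f j : ℤ) - 1)
      have hcast : (Fin.castSucc (0 : Fin 2)) = (0 : Fin 3) := rfl
      rw [hcast, hτ1]
    rw [hfun]
  have hkey : Rtr k 0 (t + ((k : ℤ) + 1)) -
      (∑ f ∈ Finset.Nat.antidiagonalTuple (k + 1) (t - (k + 1)).toNat,
        (List.ofFn fun j : Fin (k + 1) => xg 0 (-1 - (f j : ℤ) - 1)).prod)
      ∈ Submodule.span U {xg 0 (-1)} := by
    unfold Rtr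
    have hcast : (Fin.castSucc (0 : Fin 2)) = (0 : Fin 3) := rfl
    simp only [hcast]
    exact key_lemma k _ _ (by omega)
  exact ⟨by rw [hτR]; exact hkey, hkey⟩

end PrincipalSubspaceSL3
end
end
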